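/- Let A, B, C, D ∈ ℝ² be four points in convex position (vertices of a convex quadrilateral, in cyclic order) such that the four points determine at most three distinct angle values in (0,π), and suppose opposite interior angles of the quadrilateral are equal with values γ > β (so the angles in cyclic order are γ, β, γ, β and γ ≠ β). Then the quadrilateral is a rhombus with angles π/3 and 2π/3, i.e., it is two equilateral triangles glued along a common edge. -/

import Mathlib

open EuclideanGeometry

noncomputable section

abbrev Pt : Type := EuclideanSpace ℝ (Fin 2)

/-- The point (x, y) in the Euclidean plane. -/
def pt (x y : ℝ) : Pt := (WithLp.equiv 2 (Fin 2 → ℝ)).symm ![x, y]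

/-- The set of distinct angle values in (0, π) determined by a planar point set. -/
def angleSet (P : Set Pt) : Set ℝ :=
  {θ : ℝ | θ ∈ Set.Ioo 0 Real.pi ∧
    ∃ x ∈ P, ∃ y ∈ P, ∃ z ∈ P, x ≠ y ∧ y ≠ z ∧ x ≠ z ∧ ∠ x y z = θ}


/-- A convex quadrilateral with vertices in cyclic order: the open diagonals meet and
no three consecutive vertices are collinear. -/
def ConvexQuad (A B C D : Pt) : Prop :=
  (∃ x, x ∈ openSegment ℝ A C ∧ x ∈ openSegment ℝ B D) ∧
  ¬ Collinear ℝ ({A, B, C} : Set Pt) ∧ ¬ Collinear ℝ ({B, C, D} : Set Pt) ∧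
  ¬ Collinear ℝ ({C, D, A} : Set Pt) ∧ ¬ Collinear ℝ ({D, A, B} : Set Pt)

set_option maxHeartbeats 2000000 in
theorem stmt5 (A B C D : Pt) (γ β : ℝ) (hq : ConvexQuad A B C D)
    (hA : ∠ D A B = γ) (hB : ∠ A B C = β) (hC : ∠ B C D = γ) (hD : ∠ C D A = β)
    (hgb : β < γ)
    (hcount : (angleSet {A, B, C, D}).ncard ≤ 3) :
    dist A B = dist B C ∧ dist B C = dist C D ∧ dist C D = dist D A ∧
    β = Real.pi / 3 ∧ γ = 2 * Real.pi / 3 := by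
  obtain ⟨⟨x, hxAC, hxBD⟩, hABC, hBCD, hCDA, hDAB⟩ := hq
  -- permuted noncollinearity
  have hABD : ¬ Collinear ℝ ({A, B, D} : Set Pt) :=
    fun h => hDAB (h.subset (by intro p hp; simp at hp ⊢; tauto))
  have hCBD : ¬ Collinear ℝ ({C, B, D} : Set Pt) :=
    fun h => hBCD (h.subset (by intro p hp; simp at hp ⊢; tauto))
  have hCDB : ¬ Collinear ℝ ({C, D, B} : Set Pt) :=
    fun h => hBCD (h.subset (by intro p hp; simp at hp ⊢; tauto))
  have hADB : ¬ Collinear ℝ ({A, D, B} : Set Pt) :=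
    fun h => hDAB (h.subset (by intro p hp; simp at hp ⊢; tauto))
  have hBAC : ¬ Collinear ℝ ({B, A, C} : Set Pt) :=
    fun h => hABC (h.subset (by intro p hp; simp at hp ⊢; tauto))
  have hDAC : ¬ Collinear ℝ ({D, A, C} : Set Pt) :=
    fun h => hCDA (h.subset (by intro p hp; simp at hp ⊢; tauto))
  have hACD : ¬ Collinear ℝ ({A, C, D} : Set Pt) :=
    fun h => hCDA (h.subset (by intro p hp; simp at hp ⊢; tauto))
  have hBCA : ¬ Collinear ℝ ({B, C, A} : Set Pt) :=
    fun h => hABC (h.subset (by intro p hp; simp at hp ⊢; tauto))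
  -- distinctness of vertices
  have hAB : A ≠ B := by
    rintro rfl; exact hABC ((collinear_pair ℝ A C).subset (by intro p hp; simp at hp ⊢; tauto))
  have hBC : B ≠ C := by
    rintro rfl; exact hABC ((collinear_pair ℝ A B).subset (by intro p hp; simp at hp ⊢; tauto))
  have hAC : A ≠ C := by
    rintro rfl; exact hABC ((collinear_pair ℝ A B).subset (by intro p hp; simp at hp ⊢; tauto))
  have hBD : B ≠ D := by
    rintro rfl; exact hBCD ((collinear_pair ℝ B C).subset (by intro p hp; simp at hp ⊢; tauto))
  have hCD : C ≠ D := by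
    rintro rfl; exact hBCD ((collinear_pair ℝ B C).subset (by intro p hp; simp at hp ⊢; tauto))
  have hAD : A ≠ D := by
    rintro rfl; exact hCDA ((collinear_pair ℝ C A).subset (by intro p hp; simp at hp ⊢; tauto))
  -- the intersection point
  have hxA : x ≠ A := by
    rintro rfl; exact hAC (left_mem_openSegment_iff.1 hxAC)
  have hxC : x ≠ C := by
    rintro rfl; rw [openSegment_symm] at hxAC
    exact hAC (left_mem_openSegment_iff.1 hxAC).symm
  have hxB : x ≠ B := by
    rintro rfl; exact hBD (left_mem_openSegment_iff.1 hxBD)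
  have hxD : x ≠ D := by
    rintro rfl; rw [openSegment_symm] at hxBD
    exact hBD (left_mem_openSegment_iff.1 hxBD).symm
  have hsAC : Sbtw ℝ A x C :=
    ⟨mem_segment_iff_wbtw.1 (openSegment_subset_segment ℝ _ _ hxAC), hxA, hxC⟩
  have hsBD : Sbtw ℝ B x D :=
    ⟨mem_segment_iff_wbtw.1 (openSegment_subset_segment ℝ _ _ hxBD), hxB, hxD⟩
  have hAxC : ∠ A x C = Real.pi := hsAC.angle₁₂₃_eq_pi
  have hBxD : ∠ B x D = Real.pi := hsBD.angle₁₂₃_eq_pi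
  have hCxA : ∠ C x A = Real.pi := hsAC.angle₃₂₁_eq_pi
  have hDxB : ∠ D x B = Real.pi := hsBD.angle₃₂₁_eq_pi
  -- angle identifications along rays
  have e1 : ∠ B A x = ∠ B A C := angle_eq_angle_of_angle_eq_pi B hAxC
  have e2 : ∠ A B x = ∠ A B D := angle_eq_angle_of_angle_eq_pi A hBxD
  have e3 : ∠ C B x = ∠ C B D := angle_eq_angle_of_angle_eq_pi C hBxD
  have e4 : ∠ B C x = ∠ B C A := angle_eq_angle_of_angle_eq_pi B hCxA
  have e5 : ∠ D C x = ∠ D C A := angle_eq_angle_of_angle_eq_pi D hCxA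
  have e6 : ∠ C D x = ∠ C D B := angle_eq_angle_of_angle_eq_pi C hDxB
  have e7 : ∠ A D x = ∠ A D B := angle_eq_angle_of_angle_eq_pi A hDxB
  have e8 : ∠ D A x = ∠ D A C := angle_eq_angle_of_angle_eq_pi D hAxC
  -- angles at x
  have hx1 : ∠ B x A + ∠ B x C = Real.pi := angle_add_angle_eq_pi_of_angle_eq_pi B hAxC
  have hx2 : ∠ D x A + ∠ D x C = Real.pi := angle_add_angle_eq_pi_of_angle_eq_pi D hAxC
  have hvert : ∠ A x B = ∠ C x D := angle_eq_angle_of_angle_eq_pi_of_angle_eq_pi hAxC hBxD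
  -- small triangle sums
  have T1 : ∠ x A B + ∠ A B x + ∠ B x A = Real.pi :=
    angle_add_angle_add_angle_eq_pi B (Ne.symm hxA)
  have T2 : ∠ x B C + ∠ B C x + ∠ C x B = Real.pi :=
    angle_add_angle_add_angle_eq_pi C (Ne.symm hxB)
  have T3 : ∠ x C D + ∠ C D x + ∠ D x C = Real.pi :=
    angle_add_angle_add_angle_eq_pi D (Ne.symm hxC)
  have T4 : ∠ x D A + ∠ D A x + ∠ A x D = Real.pi :=
    angle_add_angle_add_angle_eq_pi A (Ne.symm hxD)
  -- big triangle sums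
  have TA : ∠ A B D + ∠ B D A + ∠ D A B = Real.pi :=
    angle_add_angle_add_angle_eq_pi D hAB.symm
  have TB : ∠ C B D + ∠ B D C + ∠ D C B = Real.pi :=
    angle_add_angle_add_angle_eq_pi D hBC
  have TC : ∠ B A C + ∠ A C B + ∠ C B A = Real.pi :=
    angle_add_angle_add_angle_eq_pi C hAB
  have TD : ∠ D C A + ∠ C A D + ∠ A D C = Real.pi :=
    angle_add_angle_add_angle_eq_pi A hCD
  -- commutation facts used to normalize
  have c1 : ∠ x A B = ∠ B A x := angle_comm _ _ _
  have c2 : ∠ x B C = ∠ C B x := angle_comm _ _ _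
  have c3 : ∠ x C D = ∠ D C x := angle_comm _ _ _
  have c4 : ∠ x D A = ∠ A D x := angle_comm _ _ _
  have c5 : ∠ C x B = ∠ B x C := angle_comm _ _ _
  have c6 : ∠ A x D = ∠ D x A := angle_comm _ _ _
  have c7 : ∠ A x B = ∠ B x A := angle_comm _ _ _
  have c8 : ∠ C x D = ∠ D x C := angle_comm _ _ _
  have c9 : ∠ B D A = ∠ A D B := angle_comm _ _ _
  have c10 : ∠ B D C = ∠ C D B := angle_comm _ _ _
  have c11 : ∠ D C B = ∠ B C D := angle_comm _ _ _
  have c12 : ∠ A C B = ∠ B C A := angle_comm _ _ _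
  have c13 : ∠ C B A = ∠ A B C := angle_comm _ _ _
  have c14 : ∠ C A D = ∠ D A C := angle_comm _ _ _
  have c15 : ∠ A D C = ∠ C D A := angle_comm _ _ _
  -- positivity of the sub-angles
  have pb1 : 0 < ∠ A B D := angle_pos_of_not_collinear hABD
  have pb2 : 0 < ∠ C B D := angle_pos_of_not_collinear hCBD
  have pd1 : 0 < ∠ C D B := angle_pos_of_not_collinear hCDB
  have pd2 : 0 < ∠ A D B := angle_pos_of_not_collinear hADB
  have pa1 : 0 < ∠ B A C := angle_pos_of_not_collinear hBAC
  have pa2 : 0 < ∠ D A C := angle_pos_of_not_collinear hDAC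
  have pc1 : 0 < ∠ A C D := angle_pos_of_not_collinear hACD
  have pc2 : 0 < ∠ B C A := angle_pos_of_not_collinear hBCA
  have pβ : 0 < β := hB ▸ angle_pos_of_not_collinear hABC
  have lβ : β < Real.pi := hB ▸ angle_lt_pi_of_not_collinear hABC
  have pγ : 0 < γ := hA ▸ angle_pos_of_not_collinear hDAB
  have lγ : γ < Real.pi := hA ▸ angle_lt_pi_of_not_collinear hDAB
  have ca2 : ∠ A C D = ∠ D C A := angle_comm _ _ _
  -- linear relations
  have hbb : ∠ A B D + ∠ C B D = β := by linarith [T1,T2,TC,hx1,e1,e2,e3,e4,c1,c2,c5,c12,c13,hB]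
  have hdd : ∠ C D B + ∠ A D B = β := by linarith [T3,T4,TD,hx2,e5,e6,e7,e8,c3,c4,c6,c8,hvert,c7,hx1,ca2,c14,c15,hD]
  have hgbp : γ + β = Real.pi := by linarith [TA,TB,c9,c10,c11,hA,hC,hbb,hdd]
  have hac1 : ∠ B A C + ∠ B C A = γ := by linarith [TC,c12,c13,hB,hgbp]
  have hac2 : ∠ A C D + ∠ D A C = γ := by linarith [TD,ca2,c14,c15,hD,hgbp]
  have haa : ∠ B A C + ∠ D A C = γ := by linarith [T1,T4,e1,e2,e7,e8,c1,c4,c6,c7,c8,hvert,hx1,hx2,TA,c9,hA,hgbp]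
  -- the angle set
  set S : Set Pt := {A, B, C, D} with hS
  have hmem : ∀ u v w : Pt, u ∈ S → v ∈ S → w ∈ S → u ≠ v → v ≠ w → u ≠ w →
      ¬ Collinear ℝ ({u, v, w} : Set Pt) → ∠ u v w ∈ angleSet S := by
    intro u v w hu hv hw huv hvw huw hncol
    exact ⟨⟨angle_pos_of_not_collinear hncol, angle_lt_pi_of_not_collinear hncol⟩,
      u, hu, v, hv, w, hw, huv, hvw, huw, rfl⟩
  have hAS : A ∈ S := by simp [hS]
  have hBS : B ∈ S := by simp [hS]
  have hCS : C ∈ S := by simp [hS]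
  have hDS : D ∈ S := by simp [hS]
  have hγmem : γ ∈ angleSet S := hA ▸ hmem D A B hDS hAS hBS hAD.symm hAB (Ne.symm hBD) hDAB
  have hβmem : β ∈ angleSet S := hB ▸ hmem A B C hAS hBS hCS hAB hBC hAC hABC
  have hb1mem : ∠ A B D ∈ angleSet S := hmem A B D hAS hBS hDS hAB hBD hAD hABD
  have hb2mem : ∠ C B D ∈ angleSet S := hmem C B D hCS hBS hDS (Ne.symm hBC) hBD hCD hCBD
  have hd1mem : ∠ C D B ∈ angleSet S := hmem C D B hCS hDS hBS hCD (Ne.symm hBD) hBC.symm hCDB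
  have hd2mem : ∠ A D B ∈ angleSet S := hmem A D B hAS hDS hBS hAD (Ne.symm hBD) hAB hADB
  have ha1mem : ∠ B A C ∈ angleSet S := hmem B A C hBS hAS hCS hAB.symm hAC hBC hBAC
  have hfin : (angleSet S).Finite := by
    have hsub : angleSet S ⊆
        (fun t : Pt × Pt × Pt => ∠ t.1 t.2.1 t.2.2) '' (S ×ˢ S ×ˢ S) := by
      rintro θ ⟨_, u, hu, v, hv, w, hw, _, _, _, rfl⟩
      exact ⟨(u, v, w), ⟨hu, hv, hw⟩, rfl⟩
    have hSfin : S.Finite := by simp [hS]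
    exact ((hSfin.prod (hSfin.prod hSfin)).image _).subset hsub
  have hb1β : ∠ A B D < β := by linarith
  have hb1γ : ∠ A B D < γ := by linarith
  have key : ∀ θ ∈ angleSet S, θ = γ ∨ θ = β ∨ θ = ∠ A B D := by
    intro θ hθ
    by_contra hcon
    push_neg at hcon
    obtain ⟨h1, h2, h3⟩ := hcon
    have hsub4 : ({θ, γ, β, ∠ A B D} : Set ℝ) ⊆ angleSet S := by
      intro z hz
      simp only [Set.mem_insert_iff, Set.mem_singleton_iff] at hz
      rcases hz with rfl | rfl | rfl | rfl
      exacts [hθ, hγmem, hβmem, hb1mem]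
    have h4 : ({θ, γ, β, ∠ A B D} : Set ℝ).ncard = 4 := by
      rw [Set.ncard_insert_of_notMem (by simp [h1, h2, h3]),
        Set.ncard_insert_of_notMem (by
          simp only [Set.mem_insert_iff, Set.mem_singleton_iff]
          push_neg
          constructor <;> intro h <;> linarith),
        Set.ncard_pair (by intro h; linarith)]
    have := Set.ncard_le_ncard hsub4 hfin
    omega
  -- all four half-angles at B and D are equal
  have hb2 : ∠ C B D = ∠ A B D := by
    rcases key _ hb2mem with h | h | h
    · linarith
    · linarith
    · exact h
  have hd1 : ∠ C D B = ∠ A B D := by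
    rcases key _ hd1mem with h | h | h
    · linarith
    · linarith
    · exact h
  have hd2 : ∠ A D B = ∠ A B D := by
    rcases key _ hd2mem with h | h | h
    · linarith
    · linarith
    · exact h
  have hhalf : ∠ A B D = β / 2 := by linarith
  -- kite: AB = AD and CB = CD
  have hABeqAD : dist A B = dist A D := by
    apply dist_eq_of_angle_eq_angle_of_angle_ne_pi
    · rw [hd2]
    · rw [show ∠ B A D = ∠ D A B from angle_comm _ _ _, hA]; linarith
  have hCBeqCD : dist C B = dist C D := by
    apply dist_eq_of_angle_eq_angle_of_angle_ne_pi
    · rw [hd1, hb2]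
    · rw [hC]; linarith
  -- SSS: the diagonal AC bisects the angle at A
  have lcB := EuclideanGeometry.law_cos B A C
  have lcD := EuclideanGeometry.law_cos D A C
  have hdBA : dist B A = dist D A := by
    rw [dist_comm B A, dist_comm D A]; exact hABeqAD
  have hdBC : dist B C = dist D C := by
    rw [dist_comm B C, dist_comm D C]; exact hCBeqCD
  have hBA0 : dist B A ≠ 0 := fun h => hAB.symm (dist_eq_zero.1 h)
  have hCA0 : dist C A ≠ 0 := fun h => hAC.symm (dist_eq_zero.1 h)
  have hDA0 : dist D A ≠ 0 := fun h => hAD.symm (dist_eq_zero.1 h)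
  have hcos : Real.cos (∠ B A C) = Real.cos (∠ D A C) := by
    rw [hdBA, hdBC] at lcB
    have hne : (2 * dist D A * dist C A) ≠ 0 := by
      simp [hDA0, hCA0]
    refine mul_left_cancel₀ hne ?_
    linear_combination lcB - lcD
  have ha12 : ∠ B A C = ∠ D A C :=
    Real.injOn_cos ⟨angle_nonneg _ _ _, angle_le_pi _ _ _⟩
      ⟨angle_nonneg _ _ _, angle_le_pi _ _ _⟩ hcos
  have ha1γ : ∠ B A C = γ / 2 := by linarith
  -- a₁ = γ/2 must equal β, giving γ = 2β
  have hγ2β : γ = 2 * β := by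
    rcases key _ ha1mem with h | h | h
    · exfalso; rw [ha1γ] at h; linarith
    · linarith
    · exfalso; rw [ha1γ, hhalf] at h; linarith
  have hβval : β = Real.pi / 3 := by linarith
  have hγval : γ = 2 * Real.pi / 3 := by linarith
  -- sides
  have hBAeqBC : dist B A = dist B C := by
    apply dist_eq_of_angle_eq_angle_of_angle_ne_pi
    · have : ∠ B C A = γ / 2 := by linarith
      rw [ha1γ, this]
    · rw [hB]; linarith
  refine ⟨by rw [dist_comm A B]; exact hBAeqBC, ?_, ?_, hβval, hγval⟩
  · rw [dist_comm B C]; exact hCBeqCD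
  · rw [dist_comm D A]
    calc dist C D = dist C B := hCBeqCD.symm
      _ = dist B C := dist_comm _ _
      _ = dist B A := hBAeqBC.symm
      _ = dist A B := dist_comm _ _
      _ = dist A D := hABeqAD
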